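/- For every positive integer k, Σ_{i=1}^∞ h_{i+k}/(i(i+k)) = −2·ln(2)·h_k/k + (1/k)·Σ_{i=1}^k h_i/i + h_k^{(2)}/k + h_k²/k. -/

import Mathlib

open scoped BigOperators

/-- Odd harmonic number `h_k^{(n)} = ∑_{i=1}^k 1/(2i-1)^n`. -/
noncomputable def h (n k : ℕ) : ℝ := ∑ i ∈ Finset.range k, (1 : ℝ) / (2 * (i : ℝ) + 1) ^ n

/-- Generalized harmonic number `H_k^{(n)} = ∑_{i=1}^k 1/i^n`. -/
noncomputable def H (n k : ℕ) : ℝ := ∑ i ∈ Finset.range k, (1 : ℝ) / ((i : ℝ) + 1) ^ n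

/-- Riemann zeta value at a positive integer `m ≥ 2`: `ζ(m) = ∑_{n≥1} 1/n^m`. -/
noncomputable def Z (m : ℕ) : ℝ := ∑' n : ℕ+, (1 : ℝ) / ((n : ℕ) : ℝ) ^ m

namespace Stmt6Aux

open Finset Filter Topology

lemma h1_eq (k : ℕ) : h 1 k = ∑ m ∈ range k, (1:ℝ) / (2 * (m:ℝ) + 1) := by simp [h]
lemma H1_eq (k : ℕ) : H 1 k = ∑ m ∈ range k, (1:ℝ) / ((m:ℝ) + 1) := by simp [H]

lemma h1_succ (n : ℕ) : h 1 (n + 1) = h 1 n + 1 / (2 * (n : ℝ) + 1) := by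
  simp [h, Finset.sum_range_succ]
lemma H1_succ (n : ℕ) : H 1 (n + 1) = H 1 n + 1 / ((n : ℝ) + 1) := by
  simp [H, Finset.sum_range_succ]

lemma h1_nonneg (k : ℕ) : 0 ≤ h 1 k := by
  rw [h1_eq]; exact Finset.sum_nonneg fun m _ => by positivity

lemma h1_add (a b : ℕ) : h 1 (a + b) = h 1 a + ∑ m ∈ range b, (1:ℝ) / (2 * ((a:ℝ) + m) + 1) := by
  rw [h1_eq, Finset.sum_range_add, ← h1_eq]
  congr 1
  refine Finset.sum_congr rfl fun m _ => ?_
  push_cast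
  ring_nf

lemma sq_id (k : ℕ) : 2 * ∑ m ∈ range k, h 1 (m + 1) / (2 * (m:ℝ) + 1) = (h 1 k) ^ 2 + h 2 k := by
  induction k with
  | zero => simp [h]
  | succ k ih =>
    rw [Finset.sum_range_succ, mul_add, ih, h1_succ]
    have h2succ : h 2 (k + 1) = h 2 k + 1 / (2 * (k:ℝ) + 1) ^ 2 := by
      simp [h, Finset.sum_range_succ]
    rw [h2succ]
    have hc : (2 * (k:ℝ) + 1) ≠ 0 := by positivity
    field_simp
    ring

lemma partial_eq (k N : ℕ) :
    (k:ℝ) * ∑ n ∈ range N, h 1 (n+1+k) / (((n:ℝ)+1) * ((n:ℝ)+1+(k:ℝ)))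
    = h 1 k * (H 1 N - 2 * h 1 N)
      - 2 * ∑ m ∈ range k, (h 1 (N+m+1) - h 1 N) / (2*(m:ℝ)+1)
      + 2 * ∑ m ∈ range k, h 1 (m+1) / (2*(m:ℝ)+1)
      + ∑ j ∈ range k, h 1 (j+1) / ((j:ℝ)+1)
      - ∑ j ∈ range k, h 1 (N+j+1) / (((N+j : ℕ):ℝ)+1) := by
  have step1 : (k:ℝ) * ∑ n ∈ range N, h 1 (n+1+k) / (((n:ℝ)+1) * ((n:ℝ)+1+(k:ℝ)))
      = (∑ n ∈ range N, h 1 (n+1+k) / ((n:ℝ)+1))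
        - ∑ n ∈ range N, h 1 (n+1+k) / (((n+k:ℕ):ℝ)+1) := by
    rw [mul_sum, ← Finset.sum_sub_distrib]
    refine Finset.sum_congr rfl fun n _ => ?_
    have h1 : ((n:ℝ)+1) ≠ 0 := by positivity
    have h2 : ((n:ℝ)+1+(k:ℝ)) ≠ 0 := by positivity
    push_cast
    field_simp
    ring
  have step2 : (∑ n ∈ range N, h 1 (n+1+k) / (((n+k:ℕ):ℝ)+1))
      = (∑ n ∈ range N, h 1 (n+1) / ((n:ℝ)+1))
        + (∑ j ∈ range k, h 1 (N+j+1) / (((N+j:ℕ):ℝ)+1))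
        - ∑ j ∈ range k, h 1 (j+1) / ((j:ℝ)+1) := by
    set g : ℕ → ℝ := fun n => h 1 (n+1) / ((n:ℝ)+1) with hgdef
    have e1 : (∑ n ∈ range N, h 1 (n+1+k) / (((n+k:ℕ):ℝ)+1)) = ∑ n ∈ range N, g (k + n) := by
      refine Finset.sum_congr rfl fun n _ => ?_
      simp only [hgdef]
      congr 2
      · omega
      · push_cast; ring
    have e2 : ∑ x ∈ range (k + N), g x = (∑ x ∈ range k, g x) + ∑ n ∈ range N, g (k + n) :=
      Finset.sum_range_add g k N
    have e3 : ∑ x ∈ range (N + k), g x = (∑ x ∈ range N, g x) + ∑ j ∈ range k, g (N + j) :=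
      Finset.sum_range_add g N k
    rw [e1]
    have : (∑ n ∈ range N, g (k + n)) = ∑ x ∈ range (k + N), g x - ∑ x ∈ range k, g x := by
      rw [e2]; ring
    rw [this, Nat.add_comm k N, e3]
  have step3 : (∑ n ∈ range N, h 1 (n+1+k) / ((n:ℝ)+1))
      = (∑ n ∈ range N, h 1 (n+1) / ((n:ℝ)+1)) + H 1 N * h 1 k
        - 2 * ∑ m ∈ range k, (h 1 (N+m+1) - h 1 (m+1)) / (2*(m:ℝ)+1) := by
    have per_n : ∀ n ∈ range N, h 1 (n+1+k) / ((n:ℝ)+1)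
        = h 1 (n+1) / ((n:ℝ)+1)
          + ((∑ m ∈ range k, (1/((n:ℝ)+1)) * (1/(2*(m:ℝ)+1)))
            - ∑ m ∈ range k, (2/(2*(m:ℝ)+1)) * (1/(2*((n:ℝ)+(m:ℝ))+3))) := by
      intro n _
      rw [h1_add (n+1) k, add_div, Finset.sum_div, ← Finset.sum_sub_distrib]
      congr 1
      refine Finset.sum_congr rfl fun m _ => ?_
      have d1 : ((n:ℝ)+1) ≠ 0 := by positivity
      have d2 : (2*((n:ℝ)+(m:ℝ))+3) ≠ 0 := by positivity
      have d3 : (2*(m:ℝ)+1) ≠ 0 := by positivity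
      push_cast
      field_simp
      ring
    rw [Finset.sum_congr rfl per_n, Finset.sum_add_distrib, Finset.sum_sub_distrib]
    have hA : (∑ n ∈ range N, ∑ m ∈ range k, (1/((n:ℝ)+1)) * (1/(2*(m:ℝ)+1)))
        = H 1 N * h 1 k := by
      rw [H1_eq, h1_eq, Finset.sum_mul]
      exact Finset.sum_congr rfl fun n _ => by rw [Finset.mul_sum]
    have hB : (∑ n ∈ range N, ∑ m ∈ range k, (2/(2*(m:ℝ)+1)) * (1/(2*((n:ℝ)+(m:ℝ))+3)))
        = 2 * ∑ m ∈ range k, (h 1 (N+m+1) - h 1 (m+1)) / (2*(m:ℝ)+1) := by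
      rw [Finset.sum_comm, Finset.mul_sum]
      refine Finset.sum_congr rfl fun m _ => ?_
      rw [← Finset.mul_sum]
      have inner : (∑ n ∈ range N, (1:ℝ)/(2*((n:ℝ)+(m:ℝ))+3)) = h 1 (N+m+1) - h 1 (m+1) := by
        have e := h1_add (m+1) N
        have e2 : m+1+N = N+m+1 := by omega
        rw [e2] at e
        rw [e, add_sub_cancel_left]
        refine Finset.sum_congr rfl fun t _ => ?_
        push_cast
        ring_nf
      rw [inner]
      ring
    rw [hA, hB]
    ring
  have regroup : (∑ m ∈ range k, (h 1 (N+m+1) - h 1 (m+1)) / (2*(m:ℝ)+1))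
      = (∑ m ∈ range k, (h 1 (N+m+1) - h 1 N) / (2*(m:ℝ)+1)) + h 1 N * h 1 k
        - ∑ m ∈ range k, h 1 (m+1) / (2*(m:ℝ)+1) := by
    have hper : ∀ m ∈ range k, (h 1 (N+m+1) - h 1 (m+1)) / (2*(m:ℝ)+1)
        = (h 1 (N+m+1) - h 1 N) / (2*(m:ℝ)+1) + h 1 N * (1/(2*(m:ℝ)+1))
          - h 1 (m+1) / (2*(m:ℝ)+1) := fun m _ => by ring
    rw [Finset.sum_congr rfl hper, Finset.sum_sub_distrib, Finset.sum_add_distrib,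
      ← Finset.mul_sum, ← h1_eq]
  rw [step1, step2, step3, regroup]
  ring

lemma H1_double (N : ℕ) : H 1 (2 * N) = h 1 N + (1/2) * H 1 N := by
  induction N with
  | zero => simp [h, H]
  | succ N ih =>
    have e : 2 * (N + 1) = (2 * N + 1) + 1 := by ring
    rw [e, H1_succ, H1_succ, ih, h1_succ, H1_succ]
    have d1 : ((N:ℝ)+1) ≠ 0 := by positivity
    have d2 : (2*(N:ℝ)+1) ≠ 0 := by positivity
    have d3 : ((2*N:ℕ):ℝ)+1 ≠ 0 := by positivity
    have d4 : ((2*N+1:ℕ):ℝ)+1 ≠ 0 := by positivity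
    push_cast
    field_simp
    ring

lemma H1_harmonic (N : ℕ) : H 1 N = (harmonic N : ℝ) := by
  simp [H, harmonic]

lemma lim_half : Tendsto (fun N : ℕ => H 1 (2 * N) - H 1 N) atTop (𝓝 (Real.log 2)) := by
  have t2N : Tendsto (fun N : ℕ => 2 * N) atTop atTop :=
    tendsto_atTop_atTop.mpr fun b => ⟨b, fun a ha => by omega⟩
  have t1 := Real.tendsto_harmonic_sub_log
  have t2 := t1.comp t2N
  have t3 := (t2.sub t1).add_const (Real.log 2)
  rw [sub_self, zero_add] at t3
  apply t3.congr'
  filter_upwards [eventually_ge_atTop 1] with N hN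
  have hNpos : (0:ℝ) < N := by exact_mod_cast hN
  have : Real.log ((2*N : ℕ) : ℝ) = Real.log 2 + Real.log N := by
    push_cast
    rw [Real.log_mul (by norm_num) (ne_of_gt hNpos)]
  simp only [Function.comp]
  rw [this, H1_harmonic, H1_harmonic]
  ring

lemma lim_main : Tendsto (fun N : ℕ => H 1 N - 2 * h 1 N) atTop (𝓝 (-2 * Real.log 2)) := by
  have := lim_half.const_mul (-2 : ℝ)
  apply this.congr
  intro N
  nlinarith [H1_double N]

lemma lim_hdiv : Tendsto (fun n : ℕ => h 1 n / (n : ℝ)) atTop (𝓝 0) := by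
  have hu : Tendsto (fun i : ℕ => (1:ℝ) / (2 * (i : ℝ) + 1)) atTop (𝓝 0) := by
    simp only [one_div]
    apply Filter.Tendsto.inv_tendsto_atTop
    apply Filter.tendsto_atTop_add_const_right
    exact (tendsto_natCast_atTop_atTop (R := ℝ)).const_mul_atTop two_pos
  have := hu.cesaro
  apply this.congr
  intro n
  rw [inv_mul_eq_div]
  congr 1
  simp [h]

lemma limA (k : ℕ) :
    Tendsto (fun N : ℕ => ∑ m ∈ range k, (h 1 (N+m+1) - h 1 N) / (2*(m:ℝ)+1)) atTop (𝓝 0) := by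
  have key : ∀ m : ℕ, Tendsto (fun N : ℕ => (h 1 (N+m+1) - h 1 N) / (2*(m:ℝ)+1)) atTop (𝓝 0) := by
    intro m
    have inner : Tendsto (fun N : ℕ => ∑ t ∈ range (m+1), (1:ℝ) / (2*((N:ℝ)+t)+1)) atTop (𝓝 0) := by
      have terms : ∀ t ∈ range (m+1),
          Tendsto (fun N : ℕ => (1:ℝ) / (2*((N:ℝ)+(t:ℝ))+1)) atTop (𝓝 0) := by
        intro t _
        simp only [one_div]
        apply Filter.Tendsto.inv_tendsto_atTop
        apply Filter.tendsto_atTop_add_const_right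
        apply Filter.Tendsto.const_mul_atTop two_pos
        exact Filter.tendsto_atTop_add_const_right _ _ (tendsto_natCast_atTop_atTop (R := ℝ))
      have := tendsto_finset_sum (range (m+1)) terms
      simpa using this
    have := inner.div_const (2*(m:ℝ)+1)
    rw [zero_div] at this
    apply this.congr
    intro N
    congr 1
    have e : N + m + 1 = N + (m+1) := by omega
    rw [e, h1_add N (m+1)]
    ring
  have := tendsto_finset_sum (range k) (fun m (_ : m ∈ range k) => key m)
  simpa using this

lemma limB (k : ℕ) :
    Tendsto (fun N : ℕ => ∑ j ∈ range k, h 1 (N+j+1) / (((N+j : ℕ):ℝ)+1)) atTop (𝓝 0) := by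
  have key : ∀ j : ℕ, Tendsto (fun N : ℕ => h 1 (N+j+1) / (((N+j : ℕ):ℝ)+1)) atTop (𝓝 0) := by
    intro j
    have := lim_hdiv.comp (tendsto_add_atTop_nat (j+1))
    apply this.congr
    intro N
    simp only [Function.comp]
    have e : N + (j+1) = N + j + 1 := by omega
    rw [e]
    push_cast
    ring_nf
  have := tendsto_finset_sum (range k) (fun j (_ : j ∈ range k) => key j)
  simpa using this

end Stmt6Aux

open Stmt6Aux Finset Filter Topology

theorem stmt6 (k : ℕ+) :
    (∑' i : ℕ+, h 1 ((i : ℕ) + (k : ℕ)) / (((i : ℕ) : ℝ) * (((i : ℕ) : ℝ) + ((k : ℕ) : ℝ))))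
      = -2 * Real.log 2 * h 1 (k : ℕ) / ((k : ℕ) : ℝ)
        + (1 / ((k : ℕ) : ℝ)) * (∑ i ∈ Finset.Icc 1 (k : ℕ), h 1 i / (i : ℝ))
        + h 2 (k : ℕ) / ((k : ℕ) : ℝ) + (h 1 (k : ℕ)) ^ 2 / ((k : ℕ) : ℝ) := by
  set K : ℕ := (k : ℕ) with hKdef
  have hKpos : 0 < K := k.pos
  have hKne : ((K:ℕ):ℝ) ≠ 0 := by
    have : (0:ℝ) < (K:ℝ) := by exact_mod_cast hKpos
    exact ne_of_gt this
  set F : ℕ → ℝ := fun n => h 1 (n+1+K) / (((n:ℝ)+1) * ((n:ℝ)+1+(K:ℝ))) with hFdef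
  set C2 : ℝ := 2 * ∑ m ∈ range K, h 1 (m+1) / (2*(m:ℝ)+1) with hC2
  set C3 : ℝ := ∑ j ∈ range K, h 1 (j+1) / ((j:ℝ)+1) with hC3
  set L : ℝ := h 1 K * (-2 * Real.log 2) + C2 + C3 with hL
  -- the partial sums of F tend to L / K
  have limKS : Tendsto (fun N : ℕ => (K:ℝ) * ∑ n ∈ range N, F n) atTop (𝓝 L) := by
    have l1 := ((lim_main.const_mul (h 1 K)).sub ((limA K).const_mul 2)).add_const (C2 + C3)
    have l2 := l1.sub (limB K)
    have : h 1 K * (-2 * Real.log 2) - 2 * 0 + (C2 + C3) - 0 = L := by rw [hL]; ring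
    rw [this] at l2
    apply l2.congr
    intro N
    rw [partial_eq K N]
    ring
  have limS : Tendsto (fun N : ℕ => ∑ n ∈ range N, F n) atTop (𝓝 (L / (K:ℝ))) := by
    have := limKS.div_const (K:ℝ)
    apply this.congr
    intro N
    field_simp
  -- summability
  have hFnn : ∀ n, 0 ≤ F n := by
    intro n
    have := h1_nonneg (n+1+K)
    have d : (0:ℝ) < ((n:ℝ)+1) * ((n:ℝ)+1+(K:ℝ)) := by positivity
    exact div_nonneg this (le_of_lt d)
  have hmono : Monotone (fun N : ℕ => ∑ n ∈ range N, F n) := by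
    apply monotone_nat_of_le_succ
    intro n
    rw [Finset.sum_range_succ]
    linarith [hFnn n]
  have hbound : ∀ N, ∑ n ∈ range N, F n ≤ L / (K:ℝ) := fun N => hmono.ge_of_tendsto limS N
  have hsum : Summable F := summable_of_sum_range_le hFnn hbound
  have htsum : ∑' n : ℕ, F n = L / (K:ℝ) := tendsto_nhds_unique hsum.hasSum.tendsto_sum_nat limS
  -- convert ℕ+ tsum to ℕ tsum
  have eq1 : (∑' i : ℕ+, h 1 ((i : ℕ) + K) / (((i : ℕ) : ℝ) * (((i : ℕ) : ℝ) + ((K : ℕ) : ℝ))))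
      = ∑' n : ℕ, F n := by
    rw [← Equiv.tsum_eq (Equiv.pnatEquivNat.symm)
      (fun i : ℕ+ => h 1 ((i : ℕ) + K) / (((i : ℕ) : ℝ) * (((i : ℕ) : ℝ) + ((K : ℕ) : ℝ))))]
    refine tsum_congr fun n => ?_
    have hcoe : ((Equiv.pnatEquivNat.symm n : ℕ+) : ℕ) = n + 1 := by
      simp [Equiv.pnatEquivNat, Nat.succPNat]
    rw [hFdef]
    simp only [hcoe]
    push_cast
    ring_nf
  rw [eq1, htsum]
  -- final algebra
  have icc : (∑ i ∈ Finset.Icc 1 K, h 1 i / (i : ℝ)) = C3 := by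
    rw [hC3]
    rw [show Finset.Icc 1 K = Finset.Ico 1 (K+1) by rfl, Finset.sum_Ico_eq_sum_range]
    have e : K + 1 - 1 = K := by omega
    rw [e]
    refine Finset.sum_congr rfl fun j _ => ?_
    have e2 : 1 + j = j + 1 := by omega
    rw [e2]
    push_cast
    ring_nf
  rw [icc, hL, hC2, sq_id K]
  field_simp
  ring
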